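/- Define the sequence r_n by ∑_{n≥1} r_n z^n/(n!)^r = -log(∑_{n≥0} (-1)^n z^n/(n!)^r). Then each r_n is an integer. -/

import Mathlib

open PowerSeries Finset

lemma e3 (r n k : ℕ) (hr : 1 ≤ r) (hk : k ≤ n) :
    ((n+1).factorial : ℚ) ^ r * (n + 1 - k : ℕ) =
      ((n+1).choose k : ℚ) ^ (r-1) * (n.choose k) * (n+1) *
        (k.factorial : ℚ) ^ r * ((n+1-k).factorial : ℚ) ^ r := by
  obtain ⟨s, rfl⟩ : ∃ s, r = s + 1 := ⟨r - 1, by omega⟩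
  have e1 : (((n+1).choose k : ℚ)) * k.factorial * (n+1-k).factorial = (n+1).factorial := by
    exact_mod_cast congrArg (Nat.cast : ℕ → ℚ)
      (Nat.choose_mul_factorial_mul_factorial (show k ≤ n+1 by omega))
  have e2 : ((n.choose k : ℚ)) * (n+1) = ((n+1).choose k) * (n+1-k : ℕ) := by
    exact_mod_cast congrArg (Nat.cast : ℕ → ℚ) (Nat.choose_mul_succ_eq n k)
  simp only [Nat.add_sub_cancel]
  rw [← e1]
  linear_combination -(((k.factorial:ℚ))^(s+1) * (((n+1-k).factorial:ℚ))^(s+1)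
    * (((n+1).choose k : ℚ))^s) * e2

lemma sum_key (r : ℕ) (hr : 2 ≤ r) (rseq : ℕ → ℚ)
    (L g : PowerSeries ℚ)
    (hL : L = PowerSeries.mk fun n =>
      if n ≠ 0 then rseq n / ((Nat.factorial n : ℚ)) ^ r else 0)
    (hg : g = PowerSeries.mk fun n => (-1 : ℚ) ^ n / ((Nat.factorial n : ℚ)) ^ r)
    (hlog : g * L.derivativeFun = -g.derivativeFun) (n : ℕ) :
    ∑ k ∈ range (n+1), (-1:ℚ)^k * ((n+1).choose k)^(r-1) * (n.choose k) * rseq (n+1-k)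
      = (-1:ℚ)^n := by
  have hc := congrArg (coeff (R := ℚ) n) hlog
  rw [coeff_mul, Finset.Nat.sum_antidiagonal_eq_sum_range_succ_mk] at hc
  simp only [hg, hL, map_neg, derivativeFun, Derivation.toFun_eq_coe, coeff_derivative, coeff_mk, Nat.succ_ne_zero, ne_eq,
    not_false_iff, if_true] at hc
  have hfac : ((n+1).factorial : ℚ) ≠ 0 := by positivity
  have hn1 : ((n:ℚ) + 1) ≠ 0 := by positivity
  have step : ∀ k ∈ range (n+1),
      (-1:ℚ)^k * ((n+1).choose k)^(r-1) * (n.choose k) * rseq (n+1-k)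
        = ((n+1).factorial : ℚ)^r / ((n:ℚ)+1) *
          ((-1:ℚ) ^ k / (k.factorial:ℚ) ^ r *
            (rseq (n - k + 1) / ((n - k + 1).factorial:ℚ) ^ r * (((n - k : ℕ):ℚ) + 1))) := by
    intro k hk
    rw [mem_range] at hk
    have hk' : k ≤ n := by omega
    have h1 : n - k + 1 = n + 1 - k := by omega
    have h2 : (((n - k : ℕ):ℚ) + 1) = ((n + 1 - k : ℕ) : ℚ) := by
      have : n - k + 1 = n + 1 - k := by omega
      exact_mod_cast congrArg (Nat.cast : ℕ → ℚ) this
    rw [h1, h2]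
    have hKf : ((k.factorial : ℚ)) ≠ 0 := by positivity
    have hNKf : (((n+1-k).factorial : ℚ)) ≠ 0 := by positivity
    have := e3 r n k (by omega) hk'
    field_simp
    linear_combination (-rseq (n+1-k)) * this
  rw [Finset.sum_congr rfl step, ← Finset.mul_sum, hc]
  field_simp
  ring

theorem stmt_8 (r : ℕ) (hr : 2 ≤ r) (rseq : ℕ → ℚ)
    (L g : PowerSeries ℚ)
    (hL : L = PowerSeries.mk fun n =>
      if n ≠ 0 then rseq n / ((Nat.factorial n : ℚ)) ^ r else 0)
    (hg : g = PowerSeries.mk fun n => (-1 : ℚ) ^ n / ((Nat.factorial n : ℚ)) ^ r)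
    (hlog : g * L.derivativeFun = -g.derivativeFun) :
    ∀ n : ℕ, 1 ≤ n → ∃ m : ℤ, rseq n = (m : ℚ) := by
  have key : ∀ n : ℕ, rseq (n+1) = (-1:ℚ)^n -
      ∑ k ∈ range n, (-1:ℚ)^(k+1) * ((n+1).choose (k+1))^(r-1) * (n.choose (k+1)) * rseq (n-k) := by
    intro n
    have h := sum_key r hr rseq L g hL hg hlog n
    rw [Finset.sum_range_succ'] at h
    simp only [pow_zero, Nat.choose_zero_right, Nat.cast_one, one_pow, one_mul, mul_one,
      Nat.sub_zero, Nat.succ_sub_succ_eq_sub, Nat.add_sub_cancel] at h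
    linarith [h]
  have main : ∀ n : ℕ, rseq (n+1) ∈ (Int.castRingHom ℚ).range := by
    intro n
    induction n using Nat.strong_induction_on with
    | _ n ih =>
      rw [key n]
      refine sub_mem ⟨(-1)^n, by push_cast [Int.coe_castRingHom]; ring⟩ (Subring.sum_mem _ ?_)
      intro k hk
      rw [mem_range] at hk
      refine mul_mem (mul_mem (mul_mem ⟨(-1)^(k+1), by push_cast [Int.coe_castRingHom]; ring⟩
        ⟨(((n+1).choose (k+1)) : ℤ)^(r-1), by push_cast [Int.coe_castRingHom]; ring⟩)
        ⟨(n.choose (k+1) : ℤ), by push_cast [Int.coe_castRingHom]; ring⟩) ?_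
      rw [show n - k = (n - k - 1) + 1 by omega]
      exact ih _ (by omega)
  intro n hn
  obtain ⟨m, hm⟩ := main (n-1)
  exact ⟨m, by rw [show n = (n-1)+1 by omega]; exact hm.symm⟩
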